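/- arXiv:1705.02299 — 3 statements merged into one kernel-verified Lean document; each statement's English description precedes it below -/
import Mathlib

section
/- Let $S \subset \mathbb{P}^{n_1}\times\cdots\times\mathbb{P}^{n_k}$ be a finite set with $x = |S| \le k+1$, such that the Segre images $\nu(S)$ are linearly dependent, but for every proper subset $S' \subsetneq S$ the set $\nu(S')$ is linearly independent. Then there exists a subset $E \subseteq \{1,\dots,k\}$ with $|E| = k + 2 - x$ such that for every $i \in E$, the projection $\pi_i(S)$ to the $i$-th factor is a single point. -/
open Finset

noncomputable section
namespace CircuitAux
variable {k x : ℕ} {n : Fin k → ℕ}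

private def aS (v : Fin x → (i : Fin k) → Fin (n i + 1) → ℂ)
    (b : (i : Fin k) → Fin (n i + 1) → ℂ) (i : Fin k) (p : Fin x) : ℂ :=
  ∑ j, v p i j * b i j

private def NF (v : Fin x → (i : Fin k) → Fin (n i + 1) → ℂ)
    (b : (i : Fin k) → Fin (n i + 1) → ℂ) (i : Fin k) (j : Fin (n i + 1)) : Fin x → ℂ :=
  fun p => v p i j / aS v b i p

private def genF (v : Fin x → (i : Fin k) → Fin (n i + 1) → ℂ)
    (b : (i : Fin k) → Fin (n i + 1) → ℂ) (M : Finset (Fin k))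
    (mm : (i : Fin k) → Fin (n i + 1)) : Fin x → ℂ :=
  fun p => ∏ i ∈ M, NF v b i (mm i) p

private def ASp (v : Fin x → (i : Fin k) → Fin (n i + 1) → ℂ)
    (b : (i : Fin k) → Fin (n i + 1) → ℂ) (M : Finset (Fin k)) : Submodule ℂ (Fin x → ℂ) :=
  Submodule.span ℂ (Set.range (genF v b M))

private def pairL (cc : Fin x → ℂ) : (Fin x → ℂ) →ₗ[ℂ] ℂ where
  toFun g := ∑ p, cc p * g p
  map_add' g h := by simp [mul_add, Finset.sum_add_distrib]
  map_smul' a g := by simp [Finset.mul_sum]; congr 1; funext p; ring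

private lemma pairL_apply (cc : Fin x → ℂ) (g : Fin x → ℂ) :
    pairL cc g = ∑ p, cc p * g p := rfl

variable (v : Fin x → (i : Fin k) → Fin (n i + 1) → ℂ)
    (b : (i : Fin k) → Fin (n i + 1) → ℂ) (c : Fin x → ℂ)

private lemma mul_gen {i : Fin k} {M : Finset (Fin k)} (hi : i ∉ M) (j : Fin (n i + 1))
    (mm : (i : Fin k) → Fin (n i + 1)) :
    NF v b i j * genF v b M mm = genF v b (insert i M) (Function.update mm i j) := by
  classical
  funext p
  show NF v b i j p * ∏ i' ∈ M, NF v b i' (mm i') p = _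
  rw [genF, Finset.prod_insert hi, Function.update_self]
  congr 1
  refine Finset.prod_congr rfl fun i' hi' => ?_
  have : i' ≠ i := fun h => hi (h ▸ hi')
  rw [Function.update_of_ne this]

private lemma mul_mem {i : Fin k} {M : Finset (Fin k)} (hi : i ∉ M) (j : Fin (n i + 1))
    {g : Fin x → ℂ} (hg : g ∈ ASp v b M) : NF v b i j * g ∈ ASp v b (insert i M) := by
  classical
  induction hg using Submodule.span_induction with
  | mem g hgmem =>
    obtain ⟨mm, rfl⟩ := hgmem
    rw [mul_gen v b hi j mm]
    exact Submodule.subset_span ⟨_, rfl⟩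
  | zero => simpa using (Submodule.zero_mem _)
  | add g₁ g₂ _ _ h1 h2 => rw [mul_add]; exact Submodule.add_mem _ h1 h2
  | smul a g' _ h => rw [mul_smul_comm]; exact Submodule.smul_mem _ a h

private lemma one_decomp (hb : ∀ i p, aS v b i p ≠ 0) (i : Fin k) (g : Fin x → ℂ) :
    g = ∑ j, b i j • (NF v b i j * g) := by
  funext p
  rw [Finset.sum_apply]
  have : ∀ j, (b i j • (NF v b i j * g)) p = (v p i j * b i j) * ((aS v b i p)⁻¹ * g p) := by
    intro j
    show b i j * (v p i j / aS v b i p * g p) = _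
    ring
  rw [Finset.sum_congr rfl fun j _ => this j, ← Finset.sum_mul]
  show g p = aS v b i p * ((aS v b i p)⁻¹ * g p)
  rw [← mul_assoc, mul_inv_cancel₀ (hb i p), one_mul]

private lemma AS_le_insert (hb : ∀ i p, aS v b i p ≠ 0) {i : Fin k} {M : Finset (Fin k)}
    (hi : i ∉ M) : ASp v b M ≤ ASp v b (insert i M) := by
  intro g hg
  rw [one_decomp v b hb i g]
  exact Submodule.sum_mem _ fun j _ => Submodule.smul_mem _ _ (mul_mem v b hi j hg)

private lemma pair_gen (hb : ∀ i p, aS v b i p ≠ 0)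
    (hrel : ∀ mm : (i : Fin k) → Fin (n i + 1), ∑ p, c p * ∏ i, v p i (mm i) = 0)
    (M : Finset (Fin k)) (mm : (i : Fin k) → Fin (n i + 1)) :
    ∑ p, (c p * ∏ i, aS v b i p) * genF v b M mm p = 0 := by
  classical
  set coef : (i : Fin k) → Fin (n i + 1) → ℂ :=
    fun i j => if i ∈ M then (if j = mm i then (1:ℂ) else 0) else b i j with hcoef
  have step1 : ∀ p, (c p * ∏ i, aS v b i p) * genF v b M mm p
      = c p * ((∏ i ∈ M, v p i (mm i)) * ∏ i ∈ Mᶜ, aS v b i p) := by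
    intro p
    have hMa : (∏ i ∈ M, aS v b i p) ≠ 0 :=
      Finset.prod_ne_zero_iff.2 fun i _ => hb i p
    rw [genF, ← Finset.prod_mul_prod_compl M (fun i => aS v b i p)]
    show c p * ((∏ i ∈ M, aS v b i p) * ∏ i ∈ Mᶜ, aS v b i p)
        * ∏ i ∈ M, v p i (mm i) / aS v b i p = _
    rw [Finset.prod_div_distrib]
    field_simp
  have step2 : ∀ p, (∏ i ∈ M, v p i (mm i)) * (∏ i ∈ Mᶜ, aS v b i p)
      = ∏ i, (∑ j, v p i j * coef i j) := by
    intro p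
    rw [← Finset.prod_mul_prod_compl M (fun i => ∑ j, v p i j * coef i j)]
    congr 1
    · refine Finset.prod_congr rfl fun i hi => ?_
      rw [hcoef]
      simp only [hi, if_true, mul_ite, mul_one, mul_zero]
      rw [Finset.sum_ite_eq' Finset.univ (mm i) (fun j => v p i j)]
      simp
    · refine Finset.prod_congr rfl fun i hi => ?_
      rw [Finset.mem_compl] at hi
      rw [aS, hcoef]
      simp [hi]
  have step3 : ∑ p, c p * ∏ i, (∑ j, v p i j * coef i j) = 0 := by
    have expand : ∀ p, (∏ i, (∑ j, v p i j * coef i j))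
        = ∑ g ∈ Fintype.piFinset (fun _ => Finset.univ),
            (∏ i, v p i (g i)) * (∏ i, coef i (g i)) := by
      intro p
      rw [Finset.prod_univ_sum]
      exact Finset.sum_congr rfl fun g _ => Finset.prod_mul_distrib
    calc ∑ p, c p * ∏ i, (∑ j, v p i j * coef i j)
        = ∑ p, ∑ g ∈ Fintype.piFinset (fun _ => Finset.univ),
            (∏ i, coef i (g i)) * (c p * ∏ i, v p i (g i)) := by
          refine Finset.sum_congr rfl fun p _ => ?_
          rw [expand p, Finset.mul_sum]
          exact Finset.sum_congr rfl fun g _ => by ring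
      _ = ∑ g ∈ Fintype.piFinset (fun _ => Finset.univ),
            (∏ i, coef i (g i)) * (∑ p, c p * ∏ i, v p i (g i)) := by
          rw [Finset.sum_comm]
          exact Finset.sum_congr rfl fun g _ => by rw [Finset.mul_sum]
      _ = 0 := by
          refine Finset.sum_eq_zero fun g _ => ?_
          rw [hrel g, mul_zero]
  calc ∑ p, (c p * ∏ i, aS v b i p) * genF v b M mm p
      = ∑ p, c p * ∏ i, (∑ j, v p i j * coef i j) := by
        refine Finset.sum_congr rfl fun p _ => ?_
        rw [step1 p, step2 p]
    _ = 0 := step3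

private lemma NF_const (hb : ∀ i p, aS v b i p ≠ 0) {i : Fin k}
    (hi : ∀ p q : Fin x, ∃ c0 : ℂ, c0 ≠ 0 ∧ v p i = c0 • v q i) (j : Fin (n i + 1))
    (p q : Fin x) : NF v b i j p = NF v b i j q := by
  obtain ⟨c0, hc0, hpq⟩ := hi p q
  have hv : ∀ j', v p i j' = c0 * v q i j' := fun j' => by rw [hpq]; rfl
  have ha : aS v b i p = c0 * aS v b i q := by
    rw [aS, aS, Finset.mul_sum]
    exact Finset.sum_congr rfl fun j' _ => by rw [hv j']; ring
  show v p i j / aS v b i p = v q i j / aS v b i q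
  rw [hv j, ha, mul_div_mul_left _ _ hc0]

private lemma prod_mul_mem {α : Type*} (S : Submodule ℂ (Fin x → ℂ)) (fs : Finset α)
    (FF : α → Fin x → ℂ) (hFF : ∀ t ∈ fs, ∀ g ∈ S, FF t * g ∈ S) :
    ∀ g ∈ S, (∏ t ∈ fs, FF t) * g ∈ S := by
  classical
  induction fs using Finset.induction with
  | empty => intro g hg; simpa using hg
  | insert t fs' hnotmem ih =>
    intro g hg
    rw [Finset.prod_insert hnotmem, mul_assoc]
    exact hFF t (Finset.mem_insert_self _ _)
      _ (ih (fun t' ht' => hFF t' (Finset.mem_insert_of_mem ht')) g hg)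


private lemma exists_eval_ne' {m y : ℕ} (w : Fin y → Fin m → ℂ) (hw : ∀ p, w p ≠ 0) :
    ∃ b : Fin m → ℂ, ∀ p, (∑ j, w p j * b j) ≠ 0 := by
  classical
  set Q : Fin y → Polynomial ℂ := fun p => ∑ j, Polynomial.C (w p j) * Polynomial.X ^ (j : ℕ)
    with hQ
  have hQcoeff : ∀ p (j0 : Fin m), (Q p).coeff (j0 : ℕ) = w p j0 := by
    intro p j0
    rw [hQ]
    simp only [Polynomial.finset_sum_coeff, Polynomial.coeff_C_mul, Polynomial.coeff_X_pow]
    rw [Finset.sum_eq_single j0]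
    · simp
    · intro j _ hne
      have : ¬ ((j0 : ℕ) = (j : ℕ)) := by
        intro h; exact hne (Fin.ext h.symm)
      simp [this]
    · simp
  have hQne : ∀ p, Q p ≠ 0 := by
    intro p hzero
    apply hw p
    funext j
    have := hQcoeff p j
    rw [hzero] at this
    simpa using this.symm
  have hprod : (∏ p, Q p) ≠ 0 := by
    rw [Finset.prod_ne_zero_iff]
    exact fun p _ => hQne p
  have hex : ∃ t : ℂ, Polynomial.eval t (∏ p, Q p) ≠ 0 := by
    by_contra h
    push_neg at h
    exact hprod (Polynomial.funext (by simpa using h))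
  obtain ⟨t, ht⟩ := hex
  refine ⟨fun j => t ^ (j : ℕ), fun p => ?_⟩
  have heval : Polynomial.eval t (Q p) = ∑ j, w p j * t ^ (j : ℕ) := by
    rw [hQ]
    simp [Polynomial.eval_finset_sum]
  intro hz
  apply ht
  rw [Polynomial.eval_prod]
  refine Finset.prod_eq_zero (Finset.mem_univ p) ?_
  rw [heval, hz]

private lemma core {k x : ℕ} {n : Fin k → ℕ} (v : Fin x → (i : Fin k) → Fin (n i + 1) → ℂ)
    (hx1 : 0 < x) (hro : ∀ p i, v p i ≠ 0)
    (c : Fin x → ℂ) (hc : ∀ p, c p ≠ 0)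
    (hrel : ∀ mm : (i : Fin k) → Fin (n i + 1), ∑ p, c p * ∏ i, v p i (mm i) = 0)
    (hmin : ∀ γ : Fin x → ℂ,
      (∀ mm : (i : Fin k) → Fin (n i + 1), ∑ p, γ p * ∏ i, v p i (mm i) = 0) →
      (∃ q, γ q = 0) → γ = 0)
    (Act : Finset (Fin k))
    (hAct : ∀ i ∈ Act, ∃ p q : Fin x, ∀ c0 : ℂ, c0 ≠ 0 → v p i ≠ c0 • v q i)
    (hinact : ∀ i ∉ Act, ∀ p q : Fin x, ∃ c0 : ℂ, c0 ≠ 0 ∧ v p i = c0 • v q i)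
    (hA : x ≤ Act.card + 1) : False := by
  classical
  have hbex : ∀ i, ∃ bi : Fin (n i + 1) → ℂ, ∀ p, (∑ j, v p i j * bi j) ≠ 0 :=
    fun i => exists_eval_ne' (fun p => v p i) (fun p => hro p i)
  choose b hb using hbex
  have hb' : ∀ i p, aS v b i p ≠ 0 := fun i p => hb i p
  set chat : Fin x → ℂ := fun p => c p * ∏ i, aS v b i p with hchatdef
  have hchat : ∀ p, chat p ≠ 0 := fun p =>
    mul_ne_zero (hc p) (Finset.prod_ne_zero_iff.2 fun i _ => hb' i p)
  have hAS_ker : ∀ M : Finset (Fin k), ASp v b M ≤ LinearMap.ker (pairL chat) := by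
    intro M
    rw [ASp, Submodule.span_le]
    rintro g ⟨mm, rfl⟩
    rw [SetLike.mem_coe, LinearMap.mem_ker]
    exact pair_gen v b c hb' hrel M mm
  have hambient : Module.finrank ℂ (Fin x → ℂ) = x := by
    rw [Module.finrank_fintype_fun_eq_card, Fintype.card_fin]
  have p0 : Fin x := ⟨0, hx1⟩
  set 𝒜 : Finset (Finset (Fin k)) :=
    Act.powerset.filter (fun M => M.card + 1 ≤ Module.finrank ℂ (ASp v b M)) with h𝒜
  have hone_mem : (1 : Fin x → ℂ) ∈ ASp v b (∅ : Finset (Fin k)) := by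
    have h1 : genF v b (∅ : Finset (Fin k)) (fun i => 0) = 1 := by
      funext p; simp [genF]
    exact h1 ▸ Submodule.subset_span ⟨_, rfl⟩
  have hone_ne : (1 : Fin x → ℂ) ≠ 0 := by
    intro h
    have := congrFun h p0
    simpa using this
  have hempty : (∅ : Finset (Fin k)) ∈ 𝒜 := by
    rw [h𝒜, Finset.mem_filter]
    refine ⟨Finset.empty_mem_powerset _, ?_⟩
    have h1 : Submodule.span ℂ ({(1 : Fin x → ℂ)} : Set (Fin x → ℂ)) ≤ ASp v b ∅ := by
      rw [Submodule.span_le]; simpa using hone_mem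
    have h2 := Submodule.finrank_mono h1
    rw [finrank_span_singleton hone_ne] at h2
    simpa using h2
  obtain ⟨M, hM𝒜, hMmax⟩ := Finset.exists_max_image 𝒜 Finset.card ⟨∅, hempty⟩
  rw [h𝒜, Finset.mem_filter, Finset.mem_powerset] at hM𝒜
  obtain ⟨hMsub, hMrank⟩ := hM𝒜
  by_cases hMA : M = Act
  · -- full case
    have hge : x ≤ Module.finrank ℂ (ASp v b M) := by
      refine le_trans ?_ hMrank
      rw [hMA]; exact hA
    have hle : Module.finrank ℂ (ASp v b M) ≤ x := by
      have := Submodule.finrank_le (ASp v b M)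
      rwa [hambient] at this
    have htop : ASp v b M = ⊤ := by
      apply Submodule.eq_top_of_finrank_eq
      rw [hambient]
      omega
    have hsingle : Pi.single p0 (1:ℂ) ∈ LinearMap.ker (pairL chat) :=
      hAS_ker M (htop ▸ Submodule.mem_top)
    rw [LinearMap.mem_ker] at hsingle
    have hval : (pairL chat) (Pi.single p0 (1:ℂ)) = chat p0 := by
      rw [pairL_apply]
      rw [Finset.sum_eq_single p0]
      · simp
      · intro q _ hq
        rw [Pi.single_eq_of_ne hq]
        ring
      · simp
    exact hchat p0 (by rw [← hval, hsingle])
  · -- stuck case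
    have hssub : M ⊂ Act := Finset.ssubset_iff_subset_ne.2 ⟨hMsub, hMA⟩
    obtain ⟨i1, hi1A, hi1M⟩ := Finset.exists_of_ssubset hssub
    have hstuck : ∀ i, i ∈ Act → i ∉ M → ASp v b (insert i M) = ASp v b M := by
      intro i hiA hiM
      have hle' := AS_le_insert v b hb' hiM
      have hcard : (insert i M).card = M.card + 1 := Finset.card_insert_of_notMem hiM
      have hnot : insert i M ∉ 𝒜 := by
        intro hmem
        have := hMmax _ hmem
        omega
      rw [h𝒜, Finset.mem_filter, Finset.mem_powerset] at hnot
      push_neg at hnot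
      have h3 := hnot (Finset.insert_subset hiA hMsub)
      have hrk : Module.finrank ℂ (ASp v b (insert i M)) ≤ Module.finrank ℂ (ASp v b M) := by
        omega
      exact (Submodule.eq_of_le_of_finrank_le hle' hrk).symm
    have hmulAS : ∀ i, i ∈ Act → i ∉ M → ∀ (j : Fin (n i + 1)) (g : Fin x → ℂ),
        g ∈ ASp v b M → NF v b i j * g ∈ ASp v b M := by
      intro i hiA hiM j g hg
      have := mul_mem v b hiM j hg
      rwa [hstuck i hiA hiM] at this
    set Q : Finset (Fin x) := univ.filter (fun q => ∃ i, (i ∈ Act ∧ i ∉ M) ∧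
        ∃ jj : Fin (n i + 1), NF v b i jj q ≠ NF v b i jj p0) with hQ
    have hQspec : ∀ z : Fin x, z ∈ Q → ∃ i, (i ∈ Act ∧ i ∉ M) ∧
        ∃ jj : Fin (n i + 1), NF v b i jj z ≠ NF v b i jj p0 := by
      intro z hz
      simp only [hQ, Finset.mem_filter] at hz
      exact hz.2
    choose iq hiq jq hjq using fun q : {y // y ∈ Q} => hQspec q.1 q.2
    set δ : Fin x → ℂ :=
      ∏ q ∈ Q.attach, (NF v b (iq q) (jq q) - fun _ => NF v b (iq q) (jq q) q.1) with hδ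
    have hδval : ∀ p, δ p
        = ∏ q ∈ Q.attach, (NF v b (iq q) (jq q) p - NF v b (iq q) (jq q) q.1) := by
      intro p
      rw [hδ, Finset.prod_apply]
      rfl
    have hδp0 : δ p0 ≠ 0 := by
      rw [hδval]
      exact Finset.prod_ne_zero_iff.2 fun q _ => sub_ne_zero.2 fun h => (hjq q) h.symm
    have hQne : Q.Nonempty := by
      obtain ⟨p2, q2, hpq2⟩ := hAct i1 hi1A
      have hsep : ∃ jj : Fin (n i1 + 1), NF v b i1 jj p2 ≠ NF v b i1 jj q2 := by
        by_contra hall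
        push_neg at hall
        refine hpq2 (aS v b i1 p2 / aS v b i1 q2)
          (div_ne_zero (hb' i1 p2) (hb' i1 q2)) ?_
        funext j'
        have h5 := hall j'
        show v p2 i1 j' = (aS v b i1 p2 / aS v b i1 q2) * v q2 i1 j'
        have h6 : v p2 i1 j' / aS v b i1 p2 = v q2 i1 j' / aS v b i1 q2 := h5
        rw [div_eq_div_iff (hb' i1 p2) (hb' i1 q2)] at h6
        rw [div_mul_eq_mul_div, eq_div_iff (hb' i1 q2)]
        linear_combination h6
      obtain ⟨jj, hjj⟩ := hsep
      by_cases h2 : NF v b i1 jj p2 = NF v b i1 jj p0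
      · refine ⟨q2, ?_⟩
        rw [hQ, Finset.mem_filter]
        exact ⟨Finset.mem_univ _, ⟨i1, ⟨hi1A, hi1M⟩, jj, fun hh => hjj (h2.trans hh.symm)⟩⟩
      · exact ⟨p2, by
          rw [hQ, Finset.mem_filter]
          exact ⟨Finset.mem_univ _, ⟨i1, ⟨hi1A, hi1M⟩, jj, h2⟩⟩⟩
    obtain ⟨q1, hq1⟩ := hQne
    have hδq1 : δ q1 = 0 := by
      rw [hδval]
      exact Finset.prod_eq_zero (Finset.mem_attach _ ⟨q1, hq1⟩) (sub_self _)
    have hδmul : ∀ g ∈ ASp v b M, δ * g ∈ ASp v b M := by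
      rw [hδ]
      refine prod_mul_mem (ASp v b M) Q.attach _ (fun q _ g hg => ?_)
      have hsplit : (NF v b (iq q) (jq q) - fun _ => NF v b (iq q) (jq q) q.1) * g
          = NF v b (iq q) (jq q) * g - (NF v b (iq q) (jq q) q.1) • g := by
        funext p
        show (NF v b (iq q) (jq q) p - NF v b (iq q) (jq q) q.1) * g p = _
        simp only [Pi.sub_apply, Pi.mul_apply, Pi.smul_apply, smul_eq_mul]
        ring
      rw [hsplit]
      exact Submodule.sub_mem _ (hmulAS (iq q) (hiq q).1 (hiq q).2 (jq q) g hg)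
        (Submodule.smul_mem _ _ hg)
    set γ : Fin x → ℂ := fun p => c p * δ p with hγdef
    have hγrel : ∀ mm : (i : Fin k) → Fin (n i + 1), ∑ p, γ p * ∏ i, v p i (mm i) = 0 := by
      intro mm
      have hpoint : ∀ p, γ p * ∏ i, v p i (mm i)
          = chat p * ((δ * fun p' => ∏ i, NF v b i (mm i) p') p) := by
        intro p
        have hv : ∀ i : Fin k, v p i (mm i) = NF v b i (mm i) p * aS v b i p :=
          fun i => (div_mul_cancel₀ _ (hb' i p)).symm
        calc γ p * ∏ i, v p i (mm i)
            = c p * δ p * ∏ i, (NF v b i (mm i) p * aS v b i p) := by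
              rw [hγdef]
              congr 1
              exact Finset.prod_congr rfl fun i _ => hv i
          _ = chat p * (δ p * ∏ i, NF v b i (mm i) p) := by
              rw [Finset.prod_mul_distrib, hchatdef]
              ring
          _ = _ := by rw [Pi.mul_apply]
      rw [Finset.sum_congr rfl fun p _ => hpoint p]
      have hker : (δ * fun p' => ∏ i, NF v b i (mm i) p') ∈ LinearMap.ker (pairL chat) := by
        have hcstv : ∀ p', (∏ i ∈ Actᶜ, NF v b i (mm i) p')
            = ∏ i ∈ Actᶜ, NF v b i (mm i) p0 := fun p' =>
          Finset.prod_congr rfl fun i hi =>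
            NF_const v b hb' (hinact i (Finset.mem_compl.1 hi)) (mm i) p' p0
        have hsplitprod : (fun p' => ∏ i, NF v b i (mm i) p')
            = (∏ i ∈ Actᶜ, NF v b i (mm i) p0) •
              ((fun p' => ∏ i ∈ Act \ M, NF v b i (mm i) p') * genF v b M mm) := by
          funext p'
          rw [Pi.smul_apply, Pi.mul_apply]
          have e1 : ∏ i, NF v b i (mm i) p'
              = (∏ i ∈ Act, NF v b i (mm i) p') * ∏ i ∈ Actᶜ, NF v b i (mm i) p' :=
            (Finset.prod_mul_prod_compl _ _).symm
          rw [e1, hcstv p', ← Finset.prod_sdiff hMsub]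
          show (∏ i ∈ Act \ M, NF v b i (mm i) p') * (∏ i ∈ M, NF v b i (mm i) p') * _ = _
          rw [genF]
          rw [smul_eq_mul]
          ring
        rw [hsplitprod]
        have h1 : genF v b M mm ∈ ASp v b M := Submodule.subset_span ⟨mm, rfl⟩
        have h2 : (fun p' => ∏ i ∈ Act \ M, NF v b i (mm i) p') * genF v b M mm
            ∈ ASp v b M := by
          have e2 : (fun p' => ∏ i ∈ Act \ M, NF v b i (mm i) p')
              = ∏ i ∈ Act \ M, NF v b i (mm i) := by
            funext p'
            rw [Finset.prod_apply]
          rw [e2]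
          refine prod_mul_mem (ASp v b M) (Act \ M) _ (fun i hi g hg => ?_) _ h1
          rw [Finset.mem_sdiff] at hi
          exact hmulAS i hi.1 hi.2 (mm i) g hg
        have h3 := hδmul _ h2
        rw [mul_smul_comm]
        exact hAS_ker M (Submodule.smul_mem _ _ h3)
      rw [LinearMap.mem_ker] at hker
      exact hker
    have hγ0 : γ = 0 := hmin γ hγrel ⟨q1, by rw [hγdef]; show c q1 * δ q1 = 0; rw [hδq1, mul_zero]⟩
    have hne : γ p0 ≠ 0 := by
      rw [hγdef]
      exact mul_ne_zero (hc p0) hδp0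
    rw [hγ0] at hne
    exact hne rfl

end CircuitAux

/-- The coordinate tensor of the simple (rank-one) tensor `v 1 ⊗ ⋯ ⊗ v k`,
i.e. the Segre image of the point of `ℙ^{n 1} × ⋯ × ℙ^{n k}` with coordinates `v`. -/
def Simple {k : ℕ} (n : Fin k → ℕ) (v : (i : Fin k) → (Fin (n i + 1) → ℂ)) :
    ((i : Fin k) → Fin (n i + 1)) → ℂ :=
  fun j => ∏ i, v i (j i)

/-- Lemma 4.4: let `S` be a set of `x ≤ k + 1` points of `ℙ^{n 1} × ⋯ × ℙ^{n k}` whose Segre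
images are linearly dependent, every proper subset being linearly independent.  Then there is a
set `E` of `k + 2 - x` factors on which all points of `S` have the same projection. -/
theorem circuit_structure {k x : ℕ} (n : Fin k → ℕ)
    (P : Fin x → (i : Fin k) → Fin (n i + 1) → ℂ)
    (hro : ∀ p i, P p i ≠ 0)
    (hpts : ∀ p q : Fin x, p ≠ q →
      ¬ (∀ i, ∃ c : ℂ, c ≠ 0 ∧ P p i = c • P q i))
    (hx : x ≤ k + 1)
    (hdep : ¬ LinearIndependent ℂ fun p => Simple n (P p))
    (hmin : ∀ I : Finset (Fin x), I ≠ Finset.univ →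
      LinearIndependent ℂ fun p : I => Simple n (P p.1)) :
    ∃ E : Finset (Fin k), E.card = k + 2 - x ∧
      ∀ i ∈ E, ∀ p q : Fin x, ∃ c : ℂ, c ≠ 0 ∧ P p i = c • P q i := by
  classical
  rcases Nat.eq_zero_or_pos x with hx0 | hx1
  · subst hx0
    exact absurd linearIndependent_empty_type hdep
  obtain ⟨c, hcsum, hcex⟩ := Fintype.not_linearIndependent_iff.1 hdep
  have hsum_pt : ∀ (γ : Fin x → ℂ), (∑ p, γ p • Simple n (P p)) = 0 ↔
      ∀ mm : (i : Fin k) → Fin (n i + 1), ∑ p, γ p * ∏ i, P p i (mm i) = 0 := by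
    intro γ
    constructor
    · intro h mm
      have h2 := congrFun h mm
      rw [Finset.sum_apply] at h2
      simpa [Simple] using h2
    · intro h
      funext mm
      rw [Finset.sum_apply]
      simpa [Simple] using h mm
  have hrz : ∀ γ : Fin x → ℂ,
      (∀ mm : (i : Fin k) → Fin (n i + 1), ∑ p, γ p * ∏ i, P p i (mm i) = 0) →
      (∃ q, γ q = 0) → γ = 0 := by
    rintro γ hγ ⟨q0, hq0⟩
    have hI : (Finset.univ.erase q0) ≠ Finset.univ := by
      intro h
      have h2 := Finset.notMem_erase q0 (Finset.univ : Finset (Fin x))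
      rw [h] at h2
      exact h2 (Finset.mem_univ q0)
    have hli := hmin (Finset.univ.erase q0) hI
    rw [Fintype.linearIndependent_iff] at hli
    have hsum2 : ∑ p : {p // p ∈ Finset.univ.erase q0}, γ p.1 • Simple n (P p.1) = 0 := by
      rw [Finset.sum_coe_sort (Finset.univ.erase q0) (fun p => γ p • Simple n (P p))]
      rw [Finset.sum_erase _ (by rw [hq0, zero_smul])]
      exact (hsum_pt γ).2 hγ
    have hz := hli (fun p => γ p.1) hsum2
    funext p
    by_cases hp : p = q0
    · rw [hp]; exact hq0
    · exact hz ⟨p, Finset.mem_erase.2 ⟨hp, Finset.mem_univ p⟩⟩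
  have hc0 : ∀ p, c p ≠ 0 := by
    intro p hp
    obtain ⟨i0, hi0⟩ := hcex
    have h3 := hrz c ((hsum_pt c).1 hcsum) ⟨p, hp⟩
    rw [h3] at hi0
    exact hi0 rfl
  set Act : Finset (Fin k) := Finset.univ.filter
    (fun i => ¬ ∀ p q : Fin x, ∃ c0 : ℂ, c0 ≠ 0 ∧ P p i = c0 • P q i) with hActdef
  have hinactive : ∀ i ∉ Act, ∀ p q : Fin x, ∃ c0 : ℂ, c0 ≠ 0 ∧ P p i = c0 • P q i := by
    intro i hi
    by_contra hcon
    apply hi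
    rw [hActdef, Finset.mem_filter]
    exact ⟨Finset.mem_univ _, hcon⟩
  have hcard : Act.card + 2 ≤ x := by
    by_contra hcon
    push_neg at hcon
    refine CircuitAux.core P hx1 hro c hc0 ((hsum_pt c).1 hcsum) hrz Act ?_ hinactive
      (by omega)
    intro i hi
    rw [hActdef, Finset.mem_filter] at hi
    have h4 := hi.2
    push_neg at h4
    exact h4
  have hEcard : k + 2 - x ≤ (Finset.univ \ Act).card := by
    rw [Finset.card_sdiff_of_subset (Finset.subset_univ _), Finset.card_univ, Fintype.card_fin]
    have : Act.card ≤ k := by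
      have := Finset.card_le_card (Finset.subset_univ Act)
      rwa [Finset.card_univ, Fintype.card_fin] at this
    omega
  obtain ⟨E, hEsub, hEc⟩ := Finset.exists_subset_card_eq hEcard
  refine ⟨E, hEc, ?_⟩
  intro i hi p q
  have h5 := hEsub hi
  rw [Finset.mem_sdiff] at h5
  exact hinactive i h5.2 p q
end
end

section
/- Let $A, B$ be zero-dimensional subschemes of $Y = \mathbb{P}^{n_1}\times\cdots\times\mathbb{P}^{n_k}$ whose Segre images $\nu(A), \nu(B)$ are each linearly independent. Then $\dim(\langle\nu(A)\rangle \cap \langle\nu(B)\rangle) = \dim\langle\nu(A\cap B)\rangle + h^1(\mathcal{I}_{A\cup B}(1))$. -/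
open Finset

noncomputable section

/-- Proposition 2.4 (reduced case): for finite subsets `A`, `B` of the product of projective
spaces with `ν(A)` and `ν(B)` linearly independent,
`dim (⟨ν A⟩ ∩ ⟨ν B⟩) = dim ⟨ν (A ∩ B)⟩ + h¹(𝓘_{A∪B}(1))`, where in affine terms
`h¹(𝓘_{A∪B}(1)) = #(A ∪ B) - dim ⟨ν (A ∪ B)⟩` (affine dimensions of spans). -/
theorem span_inter_span {k : ℕ} (n : Fin k → ℕ)
    (A B : Finset ((i : Fin k) → Fin (n i + 1) → ℂ))
    (hro : ∀ v ∈ A ∪ B, ∀ i, v i ≠ 0)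
    (hA : LinearIndependent ℂ fun a : A => Simple n a.1)
    (hB : LinearIndependent ℂ fun b : B => Simple n b.1) :
    Module.finrank ℂ
        ↥(Submodule.span ℂ (Simple n '' ↑A) ⊓ Submodule.span ℂ (Simple n '' ↑B))
      = Module.finrank ℂ ↥(Submodule.span ℂ (Simple n '' ↑(A ∩ B)))
        + ((A ∪ B).card
            - Module.finrank ℂ ↥(Submodule.span ℂ (Simple n '' ↑(A ∪ B)))) := by
  classical
  -- rank of span of image of a finset with independent family = card
  have rkA : Module.finrank ℂ ↥(Submodule.span ℂ (Simple n '' ↑A)) = A.card := by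
    rw [show Simple n '' ↑A = Set.range (fun a : A => Simple n a.1) from Set.image_eq_range _ _,
      finrank_span_eq_card hA]
    simp
  have rkB : Module.finrank ℂ ↥(Submodule.span ℂ (Simple n '' ↑B)) = B.card := by
    rw [show Simple n '' ↑B = Set.range (fun b : B => Simple n b.1) from Set.image_eq_range _ _,
      finrank_span_eq_card hB]
    simp
  have hAB : LinearIndependent ℂ fun a : (A ∩ B : Finset _) => Simple n a.1 := by
    have : (fun a : (A ∩ B : Finset _) => Simple n a.1)
        = (fun a : A => Simple n a.1) ∘ (fun x : (A ∩ B : Finset _) =>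
            (⟨x.1, (Finset.mem_inter.mp x.2).1⟩ : A)) := rfl
    rw [this]
    refine hA.comp _ ?_
    intro x y h
    exact Subtype.ext (Subtype.mk_eq_mk.mp h)
  have rkI : Module.finrank ℂ ↥(Submodule.span ℂ (Simple n '' ↑(A ∩ B))) = (A ∩ B).card := by
    rw [show Simple n '' ↑(A ∩ B) = Set.range (fun a : (A ∩ B : Finset _) => Simple n a.1)
      from Set.image_eq_range _ _, finrank_span_eq_card hAB]
    simp
  have hsup : Submodule.span ℂ (Simple n '' ↑A) ⊔ Submodule.span ℂ (Simple n '' ↑B)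
      = Submodule.span ℂ (Simple n '' ↑(A ∪ B)) := by
    rw [Finset.coe_union, Set.image_union, Submodule.span_union]
  have hdim : Module.finrank ℂ
        ↥(Submodule.span ℂ (Simple n '' ↑A) ⊔ Submodule.span ℂ (Simple n '' ↑B))
      + Module.finrank ℂ
        ↥(Submodule.span ℂ (Simple n '' ↑A) ⊓ Submodule.span ℂ (Simple n '' ↑B))
      = Module.finrank ℂ ↥(Submodule.span ℂ (Simple n '' ↑A))
      + Module.finrank ℂ ↥(Submodule.span ℂ (Simple n '' ↑B)) :=
    Submodule.finrank_sup_add_finrank_inf_eq _ _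
  rw [hsup, rkA, rkB] at hdim
  have hle : Module.finrank ℂ ↥(Submodule.span ℂ (Simple n '' ↑(A ∪ B))) ≤ (A ∪ B).card := by
    have : Simple n '' ↑(A ∪ B) = ↑((A ∪ B).image (Simple n)) := by simp
    rw [this]
    exact le_trans (finrank_span_finset_le_card _) (Finset.card_image_le)
  have hcard : A.card + B.card = (A ∪ B).card + (A ∩ B).card :=
    (Finset.card_union_add_card_inter A B).symm
  omega
end
end

section
/- Let $A \subset \mathbb{P}^n$ be a finite set of $c+1$ points that imposes independent conditions on forms of degree $e$ (i.e., $h^1(\mathcal{J}_A(e)) = 0$) for some $e \le k/2$, where $k \ge 2$. Let $T$ be a degree-$k$ form lying in the span of the $k$-th Veronese images $\{v_k(a) : a \in A\}$ but not in the span of the Veronese images of any proper subset. Then the rank of $T$ as a tensor in $(\mathbb{C}^{n+1})^{\otimes k}$ equals $c+1$; in particular the tensor rank of $T$ equals its symmetric rank. -/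
open Finset

noncomputable section

/-- The rank of a tensor: the minimal number of simple tensors summing to it. -/
def tensorRank {k : ℕ} (n : Fin k → ℕ) (T : ((i : Fin k) → Fin (n i + 1)) → ℂ) : ℕ :=
  sInf {r | ∃ v : Fin r → ((i : Fin k) → (Fin (n i + 1) → ℂ)), T = ∑ p, Simple n (v p)}

/-- The `k`-th Veronese image of `u`: the coordinate tensor of `u^{⊗ k}`. -/
def Power {k n : ℕ} (u : Fin (n + 1) → ℂ) : (Fin k → Fin (n + 1)) → ℂ :=
  fun j => ∏ i, u (j i)

/-- The symmetric rank of a symmetric tensor in `(ℂ^{n+1})^{⊗ k}`. -/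
def symRank {k n : ℕ} (T : (Fin k → Fin (n + 1)) → ℂ) : ℕ :=
  sInf {r | ∃ (u : Fin r → Fin (n + 1) → ℂ) (lam : Fin r → ℂ),
    T = ∑ p, lam p • Power (u p)}

/-- A monomial of total degree `e` can be written as a product of `e` coordinate values. -/
lemma aux_index {n e : ℕ} (d : Fin (n + 1) →₀ ℕ) (hd : Finsupp.degree d = e) :
    ∃ j : Fin e → Fin (n + 1), ∀ u : Fin (n + 1) → ℂ,
      (∏ i, u (j i)) = d.prod fun x k => u x ^ k := by
  classical
  set l := d.toMultiset.toList with hl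
  have hlen : l.length = e := by
    rw [hl, Multiset.length_toList, Finsupp.card_toMultiset, ← hd]
    simp [Finsupp.degree, Finsupp.sum]
    rfl
  refine ⟨fun i => l.get (Fin.cast hlen.symm i), fun u => ?_⟩
  have h1 : (∏ i : Fin e, u (l.get (Fin.cast hlen.symm i)))
      = ∏ i : Fin l.length, u (l.get i) :=
    Fintype.prod_equiv (finCongr hlen.symm) _ _ (fun i => rfl)
  have h2 : (∏ i : Fin l.length, u (l.get i)) = (l.map u).prod := by
    conv_rhs => rw [← List.ofFn_get l]
    rw [List.map_ofFn, List.prod_ofFn]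
    rfl
  have h3 : (l.map u).prod = (d.toMultiset.map u).prod := by
    rw [hl, ← Multiset.prod_coe, ← Multiset.map_coe, Multiset.coe_toList]
  rw [h1, h2, h3, Finsupp.toMultiset_map, Finsupp.prod_toMultiset]
  exact Finsupp.prod_mapDomain_index (fun a => pow_zero a) (fun a b c => pow_add a b c)

/-- Evaluation of a homogeneous polynomial of degree `e` is a linear functional
in the `e`-th Veronese power of the point. -/
lemma eval_weights {n e : ℕ} (f : MvPolynomial (Fin (n + 1)) ℂ) (hf : f.IsHomogeneous e) :
    ∃ w : (Fin e → Fin (n + 1)) → ℂ,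
      ∀ u : Fin (n + 1) → ℂ, MvPolynomial.eval u f = ∑ x, w x * Power u x := by
  classical
  have H : ∀ d : Fin (n + 1) →₀ ℕ, ∃ j : Fin e → Fin (n + 1),
      d ∈ f.support → ∀ u : Fin (n + 1) → ℂ,
        (∏ i, u (j i)) = d.prod fun x k => u x ^ k := by
    intro d
    by_cases hd : d ∈ f.support
    · have hdeg : Finsupp.degree d = e := by
        have := hf (MvPolynomial.mem_support_iff.mp hd)
        rw [Finsupp.degree_eq_weight_one]
        exact this
      obtain ⟨j, hj⟩ := aux_index d hdeg
      exact ⟨j, fun _ => hj⟩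
    · exact ⟨fun _ => 0, fun h => absurd h hd⟩
  choose J hJ using H
  refine ⟨fun x => ∑ d ∈ f.support.filter (fun d => J d = x), f.coeff d, fun u => ?_⟩
  have key : ∀ d ∈ f.support, f.coeff d * ∏ i ∈ d.support, u i ^ d i
      = f.coeff d * Power u (J d) := by
    intro d hd
    rw [show Power u (J d) = d.prod fun x k => u x ^ k from hJ d hd u]
    rfl
  rw [MvPolynomial.eval_eq, Finset.sum_congr rfl key]
  rw [← Finset.sum_fiberwise_of_maps_to (fun d _ => Finset.mem_univ (J d))
    (fun d => f.coeff d * Power u (J d))]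
  refine Finset.sum_congr rfl fun x _ => ?_
  rw [Finset.sum_mul]
  refine Finset.sum_congr rfl fun d hd => ?_
  rw [(Finset.mem_filter.mp hd).2]

/-- Corollary 3.8 (Comon): if `A ⊂ ℙ^n` is a set of `c + 1` points imposing independent
conditions on forms of degree `e ≤ k/2`, and `T` lies in the span of the `k`-th Veronese
images of `A` but of no proper subset, then the (tensor) rank of `T` is `c + 1`; in particular
it coincides with the symmetric rank of `T`. -/
theorem comon_case {n k c e : ℕ} (hk : 2 ≤ k) (he : 2 * e ≤ k)
    (a : Fin (c + 1) → Fin (n + 1) → ℂ)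
    (ha0 : ∀ p, a p ≠ 0)
    (hdist : ∀ p q, p ≠ q → ∀ s : ℂ, a p ≠ s • a q)
    (hindep : ∀ φ : Fin (c + 1) → ℂ, ∃ f : MvPolynomial (Fin (n + 1)) ℂ,
      f.IsHomogeneous e ∧ ∀ p, MvPolynomial.eval (a p) f = φ p)
    (T : (Fin k → Fin (n + 1)) → ℂ)
    (hTmem : T ∈ Submodule.span ℂ (Set.range fun p => (Power (a p) : (Fin k → Fin (n + 1)) → ℂ)))
    (hTnr : ∀ I : Finset (Fin (c + 1)), I ≠ Finset.univ →
      T ∉ Submodule.span ℂ ((fun p => (Power (a p) : (Fin k → Fin (n + 1)) → ℂ)) '' ↑I)) :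
    tensorRank (fun _ : Fin k => n) T = c + 1 ∧ symRank T = c + 1 := by
  classical
  obtain ⟨m, rfl⟩ : ∃ m, k = e + m := ⟨k - e, by omega⟩
  have hem : e ≤ m := by omega
  -- the coefficients of T in the Veronese images
  rw [Submodule.mem_span_range_iff_exists_fun] at hTmem
  obtain ⟨lam, hlam⟩ := hTmem
  -- all coefficients are nonzero
  have hlam0 : ∀ p, lam p ≠ 0 := by
    intro q hq
    refine hTnr (Finset.univ.erase q) (fun h => ?_) ?_
    · have h2 := Finset.notMem_erase q (Finset.univ : Finset (Fin (c + 1)))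
      rw [h] at h2
      exact h2 (Finset.mem_univ q)
    · rw [← hlam]
      have hsum : ∑ p, lam p • (Power (a p) : (Fin (e + m) → Fin (n + 1)) → ℂ)
          = ∑ p ∈ Finset.univ.erase q, lam p • Power (a p) :=
        (Finset.sum_erase _ (by rw [hq, zero_smul])).symm
      rw [hsum]
      exact Submodule.sum_mem _ fun p hp => Submodule.smul_mem _ _
        (Submodule.subset_span ⟨p, by simpa using hp, rfl⟩)
  -- dual polynomials in degree e
  have hf : ∀ p : Fin (c + 1), ∃ f : MvPolynomial (Fin (n + 1)) ℂ,
      f.IsHomogeneous e ∧ ∀ q, MvPolynomial.eval (a q) f = if q = p then 1 else 0 :=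
    fun p => hindep fun q => if q = p then 1 else 0
  choose F hF1 hF2 using hf
  -- a coordinate where each point is nonzero
  have hx : ∀ p, ∃ x0, a p x0 ≠ 0 := fun p => Function.ne_iff.mp (ha0 p)
  choose x0 hx0 using hx
  -- dual polynomials in degree m
  have hg : ∀ p : Fin (c + 1), ∃ g : MvPolynomial (Fin (n + 1)) ℂ,
      g.IsHomogeneous m ∧ ∀ q, MvPolynomial.eval (a q) g = if q = p then 1 else 0 := by
    intro p
    refine ⟨MvPolynomial.C ((a p (x0 p) ^ (m - e))⁻¹) *
      (F p * MvPolynomial.X (x0 p) ^ (m - e)), ?_, ?_⟩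
    · have h1 : ((MvPolynomial.X (x0 p) : MvPolynomial (Fin (n + 1)) ℂ) ^
          (m - e)).IsHomogeneous (1 * (m - e)) :=
        (MvPolynomial.isHomogeneous_X _ _).pow _
      have h2 := (MvPolynomial.isHomogeneous_C (Fin (n + 1))
        ((a p (x0 p) ^ (m - e))⁻¹)).mul ((hF1 p).mul h1)
      have : 0 + (e + 1 * (m - e)) = m := by omega
      rwa [this] at h2
    · intro q
      rw [map_mul, map_mul, MvPolynomial.eval_C, map_pow, MvPolynomial.eval_X, hF2]
      by_cases hpq : q = p
      · subst hpq
        simp [inv_mul_cancel₀ (pow_ne_zero (m - e) (hx0 q))]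
      · simp [hpq]
  choose G hG1 hG2 using hg
  -- linear functional weights
  choose w hw using fun p => eval_weights (F p) (hF1 p)
  choose w' hw' using fun p => eval_weights (G p) (hG1 p)
  have hkey : ∀ p q, ∑ x, w p x * (Power (a q) : (Fin e → Fin (n + 1)) → ℂ) x
      = if q = p then 1 else 0 := fun p q => by rw [← hw p (a q), hF2]
  have hkey' : ∀ p q, ∑ y, w' p y * (Power (a q) : (Fin m → Fin (n + 1)) → ℂ) y
      = if q = p then 1 else 0 := fun p q => by rw [← hw' p (a q), hG2]
  -- splitting products over appended indices
  have hPow : ∀ (u : Fin (n + 1) → ℂ) (x : Fin e → Fin (n + 1)) (y : Fin m → Fin (n + 1)),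
      (Power u : (Fin (e + m) → Fin (n + 1)) → ℂ) (Fin.append x y)
        = Power u x * Power u y := by
    intro u x y
    simp only [Power]
    rw [Fin.prod_univ_add (f := fun i => u (Fin.append x y i))]
    simp [Fin.append_left, Fin.append_right]
  -- scaled powers are simple tensors
  have hscale : ∀ (s : ℂ) (u : Fin (n + 1) → ℂ),
      ∃ v : (i : Fin (e + m)) → Fin (n + 1) → ℂ,
        Simple (fun _ => n) v = s • (Power u : (Fin (e + m) → Fin (n + 1)) → ℂ) := by
    intro s u
    haveI : NeZero (e + m) := ⟨by omega⟩
    refine ⟨fun i => if i = 0 then s • u else u, ?_⟩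
    funext j
    simp only [Simple, Power, Pi.smul_apply, smul_eq_mul]
    rw [← Finset.mul_prod_erase Finset.univ _ (Finset.mem_univ (0 : Fin (e + m))),
      ← Finset.mul_prod_erase Finset.univ (fun i => u (j i))
        (Finset.mem_univ (0 : Fin (e + m)))]
    have hprod : ∏ i ∈ Finset.univ.erase (0 : Fin (e + m)),
        (if i = 0 then s • u else u) (j i)
        = ∏ i ∈ Finset.univ.erase (0 : Fin (e + m)), u (j i) :=
      Finset.prod_congr rfl fun i hi => by
        rw [if_neg (Finset.ne_of_mem_erase hi)]
    rw [hprod]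
    simp only [if_true, eq_self_iff_true, Pi.smul_apply, smul_eq_mul, if_pos]
    ring
  -- membership in the symmetric-rank set
  have hsym_mem : (c + 1) ∈ {r | ∃ (u : Fin r → Fin (n + 1) → ℂ) (lam' : Fin r → ℂ),
      T = ∑ p, lam' p • (Power (u p) : (Fin (e + m) → Fin (n + 1)) → ℂ)} :=
    ⟨a, lam, hlam.symm⟩
  -- any symmetric decomposition yields a simple decomposition
  have hconv : ∀ r, r ∈ {r | ∃ (u : Fin r → Fin (n + 1) → ℂ) (lam' : Fin r → ℂ),
        T = ∑ p, lam' p • (Power (u p) : (Fin (e + m) → Fin (n + 1)) → ℂ)} →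
      r ∈ {r | ∃ v : Fin r → ((i : Fin (e + m)) → (Fin ((fun _ : Fin (e + m) => n) i + 1) → ℂ)),
        T = ∑ p, Simple (fun _ => n) (v p)} := by
    rintro r ⟨u, lam', hT⟩
    choose v hv using fun p => hscale (lam' p) (u p)
    exact ⟨v, by rw [hT]; exact Finset.sum_congr rfl fun p _ => (hv p).symm⟩
  have htr_mem := hconv _ hsym_mem
  -- lower bound: any simple decomposition has at least c+1 terms
  have lower : ∀ (r : ℕ) (v : Fin r → ((i : Fin (e + m)) → Fin (n + 1) → ℂ)),
      T = ∑ s, Simple (fun _ => n) (v s) → c + 1 ≤ r := by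
    intro r v hv
    set M : Matrix (Fin e → Fin (n + 1)) (Fin m → Fin (n + 1)) ℂ :=
      Matrix.of fun x y => T (Fin.append x y) with hMdef
    set B : Matrix (Fin e → Fin (n + 1)) (Fin r) ℂ :=
      Matrix.of fun x s => ∏ i : Fin e, v s (Fin.castAdd m i) (x i) with hBdef
    set C : Matrix (Fin r) (Fin m → Fin (n + 1)) ℂ :=
      Matrix.of fun s y => ∏ i : Fin m, v s (Fin.natAdd e i) (y i) with hCdef
    have hM : M = B * C := by
      ext x y
      simp only [hMdef, hBdef, hCdef, Matrix.of_apply, Matrix.mul_apply, hv, Simple,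
        Finset.sum_apply]
      refine Finset.sum_congr rfl fun s _ => ?_
      rw [Fin.prod_univ_add (f := fun i => v s i (Fin.append x y i))]
      simp [Fin.append_left, Fin.append_right]
    have hMval : ∀ x y, M x y = ∑ s, lam s *
        ((Power (a s) : (Fin e → Fin (n + 1)) → ℂ) x *
         (Power (a s) : (Fin m → Fin (n + 1)) → ℂ) y) := by
      intro x y
      have : M x y = T (Fin.append x y) := rfl
      rw [this, ← hlam]
      simp only [Finset.sum_apply, Pi.smul_apply, smul_eq_mul]
      exact Finset.sum_congr rfl fun s _ => by rw [hPow]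
    set Fm : Matrix (Fin (c + 1)) (Fin e → Fin (n + 1)) ℂ := Matrix.of fun p x => w p x
    set Gm : Matrix (Fin m → Fin (n + 1)) (Fin (c + 1)) ℂ := Matrix.of fun y q => w' q y
    have hdiag : Fm * M * Gm = Matrix.diagonal lam := by
      ext p q
      have hrow : ∀ y, (Fm * M) p y = lam p *
          (Power (a p) : (Fin m → Fin (n + 1)) → ℂ) y := by
        intro y
        simp only [Matrix.mul_apply, Matrix.of_apply, Fm]
        calc ∑ x, w p x * M x y
            = ∑ x, ∑ s, lam s * (Power (a s) : (Fin m → Fin (n + 1)) → ℂ) y *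
              (w p x * (Power (a s) : (Fin e → Fin (n + 1)) → ℂ) x) := by
              refine Finset.sum_congr rfl fun x _ => ?_
              rw [hMval, Finset.mul_sum]
              exact Finset.sum_congr rfl fun s _ => by ring
          _ = ∑ s, lam s * (Power (a s) : (Fin m → Fin (n + 1)) → ℂ) y *
              ∑ x, w p x * (Power (a s) : (Fin e → Fin (n + 1)) → ℂ) x := by
              rw [Finset.sum_comm]
              exact Finset.sum_congr rfl fun s _ => (Finset.mul_sum _ _ _).symm
          _ = ∑ s, lam s * (Power (a s) : (Fin m → Fin (n + 1)) → ℂ) y *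
              (if s = p then 1 else 0) := by
              exact Finset.sum_congr rfl fun s _ => by rw [hkey]
          _ = lam p * (Power (a p) : (Fin m → Fin (n + 1)) → ℂ) y := by
              simp [mul_ite]
      simp only [Matrix.mul_apply]
      calc ∑ y, (Fm * M) p y * Gm y q
          = ∑ y, lam p * (w' q y * (Power (a p) : (Fin m → Fin (n + 1)) → ℂ) y) := by
            refine Finset.sum_congr rfl fun y _ => ?_
            rw [hrow]
            simp only [Matrix.of_apply, Gm]
            ring
        _ = lam p * ∑ y, w' q y * (Power (a p) : (Fin m → Fin (n + 1)) → ℂ) y :=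
            (Finset.mul_sum _ _ _).symm
        _ = Matrix.diagonal lam p q := by
            rw [hkey']
            by_cases hpq : p = q
            · subst hpq; simp [Matrix.diagonal]
            · simp [Matrix.diagonal, hpq, Ne.symm hpq]
    have hrank1 : (Matrix.diagonal lam).rank = c + 1 := by
      rw [Matrix.rank_diagonal]
      rw [Fintype.card_subtype]
      rw [Finset.filter_true_of_mem (fun i _ => hlam0 i)]
      simp
    have hle1 : (Matrix.diagonal lam).rank ≤ M.rank := by
      rw [← hdiag]
      exact le_trans (Matrix.rank_mul_le_left _ _) (Matrix.rank_mul_le_right _ _)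
    have hle2 : M.rank ≤ r := by
      rw [hM]
      exact le_trans (Matrix.rank_mul_le_left _ _)
        (le_trans (Matrix.rank_le_card_width _) (by simp))
    omega
  -- conclusion
  have htr_nonempty : {r | ∃ v : Fin r →
      ((i : Fin (e + m)) → (Fin ((fun _ : Fin (e + m) => n) i + 1) → ℂ)),
      T = ∑ p, Simple (fun _ => n) (v p)}.Nonempty := ⟨c + 1, htr_mem⟩
  have hsym_nonempty : {r | ∃ (u : Fin r → Fin (n + 1) → ℂ) (lam' : Fin r → ℂ),
      T = ∑ p, lam' p • (Power (u p) : (Fin (e + m) → Fin (n + 1)) → ℂ)}.Nonempty :=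
    ⟨c + 1, hsym_mem⟩
  have h_tr_le_sym : tensorRank (fun _ : Fin (e + m) => n) T ≤ symRank T :=
    Nat.sInf_le (hconv _ (Nat.sInf_mem hsym_nonempty))
  have h_sym_le : symRank T ≤ c + 1 := Nat.sInf_le hsym_mem
  have h_tr_ge : c + 1 ≤ tensorRank (fun _ : Fin (e + m) => n) T := by
    obtain ⟨v, hv⟩ := Nat.sInf_mem htr_nonempty
    exact lower _ v hv
  constructor <;> omega
end
end
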